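/- Let H : ℝ^d → ℝ^{d×d} take positive definite values with αI ⪯ H(w) ⪯ βI for all w (0 < α ≤ β), let F be γ-smooth and λ-strongly convex with respect to the Euclidean norm with minimum F*, and consider updates w_{k+1} = w(η) where w(t) solves ẇ(t) = −H(w(t))⁻¹∇F(w_k) with w(0) = w_k and stepsize η = α²/(γβ). Then F(w_K) − F* ≤ (F(w_0) − F*)·exp(−λα²K/(γβ²)). -/

import Mathlib

open Set RealInnerProductSpace


lemma psd_cs {d : ℕ} (A : EuclideanSpace ℝ (Fin d) →L[ℝ] EuclideanSpace ℝ (Fin d))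
    (hsym : ∀ u v, ⟪A u, v⟫ = ⟪u, A v⟫) (hpos : ∀ v, 0 ≤ ⟪v, A v⟫) (u v : EuclideanSpace ℝ (Fin d)) :
    ⟪u, A v⟫ ^ 2 ≤ ⟪u, A u⟫ * ⟪v, A v⟫ := by
  have key : ∀ t : ℝ, 0 ≤ ⟪v, A v⟫ * (t * t) + (2 * ⟪u, A v⟫) * t + ⟪u, A u⟫ := by
    intro t
    have h := hpos (u + t • v)
    have hexp : ⟪u + t • v, A (u + t • v)⟫
        = ⟪u, A u⟫ + t * ⟪u, A v⟫ + t * ⟪v, A u⟫ + (t * t) * ⟪v, A v⟫ := by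
      simp only [map_add, map_smul, inner_add_left, inner_add_right, real_inner_smul_left,
        real_inner_smul_right]
      ring
    have hsymuv : ⟪v, A u⟫ = ⟪u, A v⟫ := by
      rw [← hsym u v, real_inner_comm]
    rw [hexp, hsymuv] at h
    nlinarith [h]
  have hd : discrim ⟪v, A v⟫ (2 * ⟪u, A v⟫) ⟪u, A u⟫ ≤ 0 := discrim_le_zero key
  rw [discrim] at hd
  nlinarith [hd]

lemma descent_step {d : ℕ} (F : EuclideanSpace ℝ (Fin d) → ℝ)
    (H : EuclideanSpace ℝ (Fin d) → (EuclideanSpace ℝ (Fin d) →L[ℝ] EuclideanSpace ℝ (Fin d)))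
    (α β γ η : ℝ) (hα : 0 < α) (hβ : 0 < β) (hγ : 0 < γ)
    (hF : Differentiable ℝ F)
    (hsmooth : ∀ x y, ‖gradient F x - gradient F y‖ ≤ γ * ‖x - y‖)
    (hHsym : ∀ x u v, ⟪H x u, v⟫ = ⟪u, H x v⟫)
    (hHlb : ∀ x v, α * ‖v‖ ^ 2 ≤ ⟪v, H x v⟫)
    (hHub : ∀ x v, ⟪v, H x v⟫ ≤ β * ‖v‖ ^ 2)
    (hη : η = α ^ 2 / (γ * β))
    (w0 w1 : EuclideanSpace ℝ (Fin d))
    (p p' : ℝ → EuclideanSpace ℝ (Fin d))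
    (hp0 : p 0 = w0) (hp1 : w1 = p η)
    (hode : ∀ t ∈ Set.Icc (0 : ℝ) η,
      HasDerivAt p (p' t) t ∧ H (p t) (p' t) = -gradient F w0) :
    F w1 ≤ F w0 - α ^ 2 * ‖gradient F w0‖ ^ 2 / (2 * γ * β ^ 2) := by
  set g := gradient F w0 with hg
  have hηpos : 0 < η := by rw [hη]; positivity
  -- pointwise quadratic-form facts
  have hpos : ∀ t ∈ Icc (0:ℝ) η, ∀ v, 0 ≤ ⟪v, H (p t) v⟫ := by
    intro t _ v
    have := hHlb (p t) v
    nlinarith [sq_nonneg ‖v‖]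
  have hQ : ∀ t ∈ Icc (0:ℝ) η, ⟪g, p' t⟫ ≤ -(‖g‖ ^ 2 / β) := by
    intro t ht
    have hAv : H (p t) (p' t) = -g := (hode t ht).2
    have hcs := psd_cs (H (p t)) (hHsym (p t)) (hpos t ht) g (p' t)
    rw [hAv] at hcs
    have h1 : ⟪g, -g⟫ = -(‖g‖ ^ 2) := by
      rw [inner_neg_right, real_inner_self_eq_norm_sq]
    rw [h1] at hcs
    have h2 : ⟪g, H (p t) g⟫ ≤ β * ‖g‖ ^ 2 := hHub (p t) g
    have hQpos : 0 ≤ ⟪p' t, H (p t) (p' t)⟫ := hpos t ht _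
    have h3 : ⟪g, p' t⟫ = -⟪p' t, H (p t) (p' t)⟫ := by
      rw [hAv, inner_neg_right, real_inner_comm]; ring
    have hQeq : ⟪p' t, -g⟫ = ⟪p' t, H (p t) (p' t)⟫ := by rw [hAv]
    rw [hQeq] at hcs
    rcases eq_or_lt_of_le (norm_nonneg g) with h0 | h0
    · have hz : ‖g‖ ^ 2 = 0 := by rw [← h0]; ring
      rw [h3, hz, zero_div, neg_zero]
      linarith [hQpos]
    · have hb : ‖g‖ ^ 2 / β ≤ ⟪p' t, H (p t) (p' t)⟫ := by
        rw [div_le_iff₀ hβ]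
        nlinarith [hcs, h2, hQpos, pow_pos h0 2,
          mul_le_mul_of_nonneg_right h2 hQpos]
      rw [h3]; linarith
  have hspeed : ∀ t ∈ Icc (0:ℝ) η, ‖p' t‖ ≤ ‖g‖ / α := by
    intro t ht
    have hAv : H (p t) (p' t) = -g := (hode t ht).2
    have hlo := hHlb (p t) (p' t)
    have h3 : ⟪p' t, H (p t) (p' t)⟫ = -⟪g, p' t⟫ := by
      rw [hAv, inner_neg_right, real_inner_comm]
    have habs : -⟪g, p' t⟫ ≤ ‖g‖ * ‖p' t‖ := by
      have := abs_real_inner_le_norm g (p' t)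
      cases abs_le.1 this with
      | intro h _ => linarith
    rcases eq_or_lt_of_le (norm_nonneg (p' t)) with h0 | h0
    · rw [← h0]; positivity
    · rw [le_div_iff₀ hα]
      nlinarith [hlo, h3, habs]
  have hdist : ∀ t ∈ Icc (0:ℝ) η, ‖p t - p 0‖ ≤ ‖g‖ / α * (t - 0) :=
    norm_image_sub_le_of_norm_deriv_le_segment'
      (fun t ht => ((hode t ht).1).hasDerivWithinAt)
      (fun t ht => hspeed t (Ico_subset_Icc_self ht))
  -- derivative of F ∘ p
  have hFp : ∀ t ∈ Icc (0:ℝ) η,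
      HasDerivAt (fun s => F (p s)) ⟪gradient F (p t), p' t⟫ t := by
    intro t ht
    have h1 : HasFDerivAt F (InnerProductSpace.toDual ℝ _ (gradient F (p t))) (p t) :=
      ((hF (p t)).hasGradientAt).hasFDerivAt
    have h2 := h1.comp_hasDerivAt t (hode t ht).1
    rw [InnerProductSpace.toDual_apply_apply] at h2
    exact h2
  -- the comparison function
  set φ : ℝ → ℝ := fun t => F (p t) + ‖g‖ ^ 2 / β * t - γ * ‖g‖ ^ 2 / (2 * α ^ 2) * t ^ 2
    with hφ
  have hφderiv : ∀ t ∈ Icc (0:ℝ) η,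
      HasDerivAt φ (⟪gradient F (p t), p' t⟫ + ‖g‖ ^ 2 / β
        - γ * ‖g‖ ^ 2 / (2 * α ^ 2) * (2 * t)) t := by
    intro t ht
    have h1 := hFp t ht
    have h2 : HasDerivAt (fun s : ℝ => ‖g‖ ^ 2 / β * s) (‖g‖ ^ 2 / β) t := by
      simpa using (hasDerivAt_id t).const_mul (‖g‖ ^ 2 / β)
    have h3 : HasDerivAt (fun s : ℝ => γ * ‖g‖ ^ 2 / (2 * α ^ 2) * s ^ 2)
        (γ * ‖g‖ ^ 2 / (2 * α ^ 2) * (2 * t)) t := by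
      have := (hasDerivAt_pow 2 t).const_mul (γ * ‖g‖ ^ 2 / (2 * α ^ 2))
      simpa [mul_comm, mul_assoc, mul_left_comm] using this
    exact (h1.add h2).sub h3
  have hφd_nonpos : ∀ t ∈ Icc (0:ℝ) η,
      ⟪gradient F (p t), p' t⟫ + ‖g‖ ^ 2 / β
        - γ * ‖g‖ ^ 2 / (2 * α ^ 2) * (2 * t) ≤ 0 := by
    intro t ht
    obtain ⟨ht0, htη⟩ := ht
    have hsplit : ⟪gradient F (p t), p' t⟫
        = ⟪g, p' t⟫ + ⟪gradient F (p t) - g, p' t⟫ := by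
      rw [inner_sub_left]; ring
    have herr : ⟪gradient F (p t) - g, p' t⟫ ≤ γ * (‖g‖ / α * t) * (‖g‖ / α) := by
      have h1 : ⟪gradient F (p t) - g, p' t⟫ ≤ ‖gradient F (p t) - g‖ * ‖p' t‖ :=
        real_inner_le_norm _ _
      have h2 : ‖gradient F (p t) - g‖ ≤ γ * ‖p t - p 0‖ := by
        rw [hg, hp0]; exact hsmooth (p t) w0
      have h3 := hdist t ⟨ht0, htη⟩
      have h4 := hspeed t ⟨ht0, htη⟩
      have h5 : ‖gradient F (p t) - g‖ ≤ γ * (‖g‖ / α * t) := by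
        calc ‖gradient F (p t) - g‖ ≤ γ * ‖p t - p 0‖ := h2
        _ ≤ γ * (‖g‖ / α * t) := by
            apply mul_le_mul_of_nonneg_left _ hγ.le
            simpa using h3
      calc ⟪gradient F (p t) - g, p' t⟫ ≤ ‖gradient F (p t) - g‖ * ‖p' t‖ := h1
      _ ≤ γ * (‖g‖ / α * t) * (‖g‖ / α) := by
          apply mul_le_mul h5 h4 (norm_nonneg _)
          positivity
    have hq := hQ t ⟨ht0, htη⟩
    rw [hsplit]
    have heq : γ * (‖g‖ / α * t) * (‖g‖ / α) = γ * ‖g‖ ^ 2 / (2 * α ^ 2) * (2 * t) := by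
      field_simp
    linarith [heq ▸ herr]
  -- φ is antitone on [0, η]
  have hanti : AntitoneOn φ (Icc 0 η) := by
    apply antitoneOn_of_deriv_nonpos (convex_Icc 0 η)
    · intro t ht
      exact ((hφderiv t ht).continuousAt).continuousWithinAt
    · rw [interior_Icc]
      intro t ht
      exact ((hφderiv t (Ioo_subset_Icc_self ht)).differentiableAt).differentiableWithinAt
    · rw [interior_Icc]
      intro t ht
      rw [(hφderiv t (Ioo_subset_Icc_self ht)).deriv]
      exact hφd_nonpos t (Ioo_subset_Icc_self ht)
  have hmain := hanti (left_mem_Icc.2 hηpos.le) (right_mem_Icc.2 hηpos.le) hηpos.le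
  replace hmain : F (p η) + ‖g‖ ^ 2 / β * η - γ * ‖g‖ ^ 2 / (2 * α ^ 2) * η ^ 2
      ≤ F (p 0) + ‖g‖ ^ 2 / β * 0 - γ * ‖g‖ ^ 2 / (2 * α ^ 2) * 0 ^ 2 := hmain
  rw [hp0] at hmain
  norm_num at hmain
  have hcompute : ‖g‖ ^ 2 / β * η - γ * ‖g‖ ^ 2 / (2 * α ^ 2) * η ^ 2
      = α ^ 2 * ‖g‖ ^ 2 / (2 * γ * β ^ 2) := by
    rw [hη]; field_simp; ring
  rw [hp1]
  linarith [hcompute]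

/-- Linear convergence of mirrorless Mirror Descent: with `αI ⪯ H(w) ⪯ βI`,
`F` γ-smooth and λ-strongly convex with minimum `F*`, and stepsize
`η = α²/(γβ)`, the updates `w_{k+1} = w(η)` of `ẇ = −H(w)⁻¹∇F(w_k)`, `w(0) = w_k`,
satisfy `F(w_K) − F* ≤ (F(w_0) − F*)·exp(−λα²K/(γβ²))`. -/
theorem stmt7 {d : ℕ} (F : EuclideanSpace ℝ (Fin d) → ℝ) (Fstar : ℝ)
    (H : EuclideanSpace ℝ (Fin d) → (EuclideanSpace ℝ (Fin d) →L[ℝ] EuclideanSpace ℝ (Fin d)))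
    (α β γ lam η : ℝ) (hα : 0 < α) (hαβ : α ≤ β) (hγ : 0 < γ) (hlam : 0 < lam)
    (hF : Differentiable ℝ F)
    (hsmooth : ∀ x y, ‖gradient F x - gradient F y‖ ≤ γ * ‖x - y‖)
    (hsc : ∀ x y, F x + ⟪gradient F x, y - x⟫ + lam / 2 * ‖y - x‖ ^ 2 ≤ F y)
    (hmin : ∃ wstar, F wstar = Fstar ∧ ∀ x, Fstar ≤ F x)
    (hHsym : ∀ x u v, ⟪H x u, v⟫ = ⟪u, H x v⟫)
    (hHlb : ∀ x v, α * ‖v‖ ^ 2 ≤ ⟪v, H x v⟫)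
    (hHub : ∀ x v, ⟪v, H x v⟫ ≤ β * ‖v‖ ^ 2)
    (hη : η = α ^ 2 / (γ * β))
    (ws : ℕ → EuclideanSpace ℝ (Fin d))
    (hupd : ∀ k : ℕ, ∃ p p' : ℝ → EuclideanSpace ℝ (Fin d),
      p 0 = ws k ∧ ws (k + 1) = p η ∧
        ∀ t ∈ Set.Icc (0 : ℝ) η,
          HasDerivAt p (p' t) t ∧ H (p t) (p' t) = -gradient F (ws k)) :
    ∀ K : ℕ, F (ws K) - Fstar ≤
      (F (ws 0) - Fstar) * Real.exp (-(lam * α ^ 2 * K) / (γ * β ^ 2)) := by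
  obtain ⟨wstar, hwstar, hlb⟩ := hmin
  have hβ : 0 < β := lt_of_lt_of_le hα hαβ
  -- PL inequality
  have hPL : ∀ x, 2 * lam * (F x - Fstar) ≤ ‖gradient F x‖ ^ 2 := by
    intro x
    have h1 := hsc x wstar
    rw [hwstar] at h1
    have h2 : -(‖gradient F x‖ * ‖wstar - x‖) ≤ ⟪gradient F x, wstar - x⟫ := by
      have := abs_real_inner_le_norm (gradient F x) (wstar - x)
      cases abs_le.1 this with
      | intro h _ => linarith
    nlinarith [sq_nonneg (‖gradient F x‖ - lam * ‖wstar - x‖), hlam]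
  -- per-step contraction
  set c : ℝ := lam * α ^ 2 / (γ * β ^ 2) with hc
  have hcpos : 0 < c := by rw [hc]; positivity
  have step : ∀ k : ℕ, F (ws (k + 1)) - Fstar ≤ (F (ws k) - Fstar) * Real.exp (-c) := by
    intro k
    obtain ⟨p, p', hp0, hp1, hode⟩ := hupd k
    have hdesc := descent_step F H α β γ η hα hβ hγ hF hsmooth hHsym hHlb hHub hη
      (ws k) (ws (k + 1)) p p' hp0 hp1 hode
    have hD : 0 ≤ F (ws k) - Fstar := sub_nonneg.2 (hlb _)
    have hg2 := hPL (ws k)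
    have hexp : 1 - c ≤ Real.exp (-c) := by
      have := Real.add_one_le_exp (-c)
      linarith
    have hstep1 : F (ws (k + 1)) - Fstar ≤ (1 - c) * (F (ws k) - Fstar) := by
      have hkey : c * (F (ws k) - Fstar) ≤ α ^ 2 * ‖gradient F (ws k)‖ ^ 2 / (2 * γ * β ^ 2) := by
        rw [hc]
        rw [div_mul_eq_mul_div, div_le_div_iff₀ (by positivity) (by positivity)]
        nlinarith [mul_le_mul_of_nonneg_left hg2 (by positivity : (0:ℝ) ≤ α ^ 2 * γ * β ^ 2)]
      linarith
    calc F (ws (k + 1)) - Fstar ≤ (1 - c) * (F (ws k) - Fstar) := hstep1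
    _ ≤ Real.exp (-c) * (F (ws k) - Fstar) := mul_le_mul_of_nonneg_right hexp hD
    _ = (F (ws k) - Fstar) * Real.exp (-c) := mul_comm _ _
  -- induction
  intro K
  induction K with
  | zero =>
    simp
  | succ K ih =>
    have h1 := step K
    have h2 := mul_le_mul_of_nonneg_right ih (Real.exp_nonneg (-c))
    have h3 : F (ws (K + 1)) - Fstar
        ≤ (F (ws 0) - Fstar) * Real.exp (-(lam * α ^ 2 * K) / (γ * β ^ 2)) * Real.exp (-c) :=
      le_trans h1 h2
    rw [mul_assoc, ← Real.exp_add] at h3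
    have hexpeq : -(lam * α ^ 2 * ↑K) / (γ * β ^ 2) + -c
        = -(lam * α ^ 2 * ↑(K + 1)) / (γ * β ^ 2) := by
      rw [hc]
      push_cast
      field_simp
      ring
    rw [hexpeq] at h3
    linarith [h3]
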